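/- arXiv:2103.00924 — 2 statements merged into one kernel-verified Lean document; each statement's English description precedes it below -/
import Mathlib

section
/- For any tripartite state ρ on H_A ⊗ H_B ⊗ H_C, the tripartite multipartite quantum discord dominates the sum D_{A;B;C}(ρ) ≥ D_{A;B}(ρ^{AB}) + D_{AB;C}(ρ), where ρ^{AB} = Tr_C ρ and D_{AB;C} treats AB as a single subsystem. -/
open Matrix Kronecker BigOperators
open scoped ComplexOrder

noncomputable section

def IsState {n : Type*} [Fintype n] [DecidableEq n] (ρ : Matrix n n ℂ) : Prop :=
  ρ.PosSemidef ∧ ρ.trace = 1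

/-- Von Neumann entropy via the eigenvalues of a Hermitian matrix. -/
noncomputable def vnEntropy {n : Type*} [Fintype n] [DecidableEq n] (ρ : Matrix n n ℂ) : ℝ :=
  if h : ρ.IsHermitian then ∑ i, Real.negMulLog (h.eigenvalues i) else 0

/-- A rank-one von Neumann measurement: a family of rank-one orthogonal
projections summing to the identity. -/
structure VNMeas (n : Type*) [Fintype n] [DecidableEq n] where
  P : n → Matrix n n ℂ
  herm : ∀ j, (P j).IsHermitian
  idem : ∀ j, P j * P j = P j
  rankOne : ∀ j, (P j).trace = 1
  orth : ∀ j k, j ≠ k → P j * P k = 0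
  sum_eq : ∑ j, P j = 1

variable {A B : Type*} [Fintype A] [DecidableEq A] [Fintype B] [DecidableEq B]

/-- reduced state on the first factor -/
noncomputable def margFst (ρ : Matrix (A × B) (A × B) ℂ) : Matrix A A ℂ :=
  fun a a' => ∑ b, ρ (a, b) (a', b)

/-- reduced state on the second factor -/
noncomputable def margSnd (ρ : Matrix (A × B) (A × B) ℂ) : Matrix B B ℂ :=
  fun b b' => ∑ a, ρ (a, b) (a, b')

/-- the post-measurement state `Σ_j (Π_j ⊗ 1) ρ (Π_j ⊗ 1)` -/
noncomputable def measFst (M : VNMeas A) (ρ : Matrix (A × B) (A × B) ℂ) :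
    Matrix (A × B) (A × B) ℂ :=
  ∑ j, (M.P j ⊗ₖ (1 : Matrix B B ℂ)) * ρ * (M.P j ⊗ₖ (1 : Matrix B B ℂ))

/-- quantum mutual information -/
noncomputable def mutualInfo (ρ : Matrix (A × B) (A × B) ℂ) : ℝ :=
  vnEntropy (margFst ρ) + vnEntropy (margSnd ρ) - vnEntropy ρ

/-- bipartite quantum discord with measurement on the first party -/
noncomputable def discord (ρ : Matrix (A × B) (A × B) ℂ) : ℝ :=
  ⨅ M : VNMeas A,
    ((vnEntropy (measFst M ρ) - vnEntropy (margFst (measFst M ρ))) -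
      (vnEntropy ρ - vnEntropy (margFst ρ)))


variable {C : Type*} [Fintype C] [DecidableEq C]

/-- threefold Kronecker product on `A × B × C` -/
noncomputable def kron3 (M : Matrix A A ℂ) (N : Matrix B B ℂ) (K : Matrix C C ℂ) :
    Matrix (A × B × C) (A × B × C) ℂ :=
  fun p q => M p.1 q.1 * N p.2.1 q.2.1 * K p.2.2 q.2.2

/-- trace out `C`: the reduced state `ρ^{AB}` -/
noncomputable def ptrC3 (ρ : Matrix (A × B × C) (A × B × C) ℂ) : Matrix (A × B) (A × B) ℂ :=
  fun x y => ∑ c, ρ (x.1, x.2, c) (y.1, y.2, c)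

/-- trace out `B`: the reduced state `ρ^{AC}` -/
noncomputable def ptrB3 (ρ : Matrix (A × B × C) (A × B × C) ℂ) : Matrix (A × C) (A × C) ℂ :=
  fun x y => ∑ b, ρ (x.1, b, x.2) (y.1, b, y.2)

/-- trace out `A`: the reduced state `ρ^{BC}` -/
noncomputable def ptrA3 (ρ : Matrix (A × B × C) (A × B × C) ℂ) : Matrix (B × C) (B × C) ℂ :=
  fun x y => ∑ a, ρ (a, x) (a, y)

/-- the reduced state `ρ^{A}` of a tripartite state -/
noncomputable def ptrBC3 (ρ : Matrix (A × B × C) (A × B × C) ℂ) : Matrix A A ℂ :=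
  fun a a' => ∑ z : B × C, ρ (a, z) (a', z)

/-- A sequential conditional measurement: a rank-one von Neumann measurement on `A`
followed by a conditional rank-one von Neumann measurement on `B`. -/
structure SeqMeas3 (A B : Type*) [Fintype A] [DecidableEq A] [Fintype B] [DecidableEq B] where
  fst : VNMeas A
  snd : A → VNMeas B

/-- state after the measurement on `A` only -/
noncomputable def meas1 (m : SeqMeas3 A B) (ρ : Matrix (A × B × C) (A × B × C) ℂ) :
    Matrix (A × B × C) (A × B × C) ℂ :=
  ∑ j, kron3 (m.fst.P j) (1 : Matrix B B ℂ) (1 : Matrix C C ℂ) * ρ *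
    kron3 (m.fst.P j) (1 : Matrix B B ℂ) (1 : Matrix C C ℂ)

/-- state after the full sequential measurement `Π^{AB}` -/
noncomputable def meas2 (m : SeqMeas3 A B) (ρ : Matrix (A × B × C) (A × B × C) ℂ) :
    Matrix (A × B × C) (A × B × C) ℂ :=
  ∑ j, ∑ k, kron3 (m.fst.P j) ((m.snd j).P k) (1 : Matrix C C ℂ) * ρ *
    kron3 (m.fst.P j) ((m.snd j).P k) (1 : Matrix C C ℂ)

/-- the quantity optimized in the tripartite multipartite quantum discord,
`−S_{BC|A}(ρ) + S_{B|Π^A}(ρ) + S_{C|Π^{AB}}(ρ)`. -/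
noncomputable def mqd3Val (m : SeqMeas3 A B) (ρ : Matrix (A × B × C) (A × B × C) ℂ) : ℝ :=
  (vnEntropy (ptrC3 (meas1 m ρ)) - vnEntropy (ptrBC3 (meas1 m ρ)))
    + (vnEntropy (meas2 m ρ) - vnEntropy (ptrC3 (meas2 m ρ)))
    - (vnEntropy ρ - vnEntropy (ptrBC3 ρ))

/-- the tripartite multipartite quantum discord `D_{A;B;C}` with ordering `A → B` -/
noncomputable def mqd3 (ρ : Matrix (A × B × C) (A × B × C) ℂ) : ℝ :=
  ⨅ m : SeqMeas3 A B, mqd3Val m ρ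

/-- lift a matrix on `A × B` to `A × B × C` by tensoring with the identity on `C` -/
noncomputable def liftAB (N : Matrix (A × B) (A × B) ℂ) :
    Matrix (A × B × C) (A × B × C) ℂ :=
  fun p q => N (p.1, p.2.1) (q.1, q.2.1) * (if p.2.2 = q.2.2 then 1 else 0)

/-- state after a von Neumann measurement on the composite party `AB` -/
noncomputable def measAB (M : VNMeas (A × B)) (ρ : Matrix (A × B × C) (A × B × C) ℂ) :
    Matrix (A × B × C) (A × B × C) ℂ :=
  ∑ j, liftAB (M.P j) * ρ * liftAB (M.P j)

/-- bipartite quantum discord `D_{AB;C}` with `AB` regarded as a single measured party -/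
noncomputable def discordAB_C (ρ : Matrix (A × B × C) (A × B × C) ℂ) : ℝ :=
  ⨅ M : VNMeas (A × B),
    ((vnEntropy (measAB M ρ) - vnEntropy (ptrC3 (measAB M ρ))) -
      (vnEntropy ρ - vnEntropy (ptrC3 ρ)))



/-! ### Auxiliary lemmas -/

section AuxGeneral
variable {n : Type*} [Fintype n] [DecidableEq n]

lemma sum_eigenvalues_eq_trace' {ρ : Matrix n n ℂ} (h : ρ.IsHermitian) :
    ((∑ i, h.eigenvalues i : ℝ) : ℂ) = ρ.trace := by
  rw [h.trace_eq_sum_eigenvalues, Complex.ofReal_sum]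
  rfl

lemma negMulLog_le_inv_exp {x : ℝ} (hx : 0 ≤ x) : Real.negMulLog x ≤ (Real.exp 1)⁻¹ := by
  rcases eq_or_lt_of_le hx with h | h
  · simp [← h, Real.negMulLog]
    positivity
  · have h1 : Real.log (x⁻¹ * (Real.exp 1)⁻¹) ≤ x⁻¹ * (Real.exp 1)⁻¹ - 1 :=
      Real.log_le_sub_one_of_pos (by positivity)
    rw [Real.log_mul (by positivity) (by positivity), Real.log_inv (Real.exp 1),
      Real.log_exp] at h1
    have hlog : Real.log x⁻¹ ≤ x⁻¹ * (Real.exp 1)⁻¹ := by linarith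
    have hx' : Real.negMulLog x = x * Real.log x⁻¹ := by
      rw [Real.negMulLog, Real.log_inv]; ring
    rw [hx']
    calc x * Real.log x⁻¹ ≤ x * (x⁻¹ * (Real.exp 1)⁻¹) :=
          mul_le_mul_of_nonneg_left hlog hx
    _ = (Real.exp 1)⁻¹ := by field_simp

lemma vnEntropy_nonneg {ρ : Matrix n n ℂ} (h : IsState ρ) : 0 ≤ vnEntropy ρ := by
  have hh := h.1.1
  rw [vnEntropy, dif_pos hh]
  have hnn : ∀ i, 0 ≤ hh.eigenvalues i := h.1.eigenvalues_nonneg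
  have hsum : ∑ i, hh.eigenvalues i = 1 := by
    have := sum_eigenvalues_eq_trace' hh
    rw [h.2] at this; exact_mod_cast this
  refine Finset.sum_nonneg fun i _ => Real.negMulLog_nonneg (hnn i) ?_
  rw [← hsum]
  exact Finset.single_le_sum (fun j _ => hnn j) (Finset.mem_univ i)

lemma vnEntropy_le {ρ : Matrix n n ℂ} (h : IsState ρ) :
    vnEntropy ρ ≤ (Fintype.card n : ℝ) * (Real.exp 1)⁻¹ := by
  have hh := h.1.1
  rw [vnEntropy, dif_pos hh]
  calc ∑ i, Real.negMulLog (hh.eigenvalues i) ≤ ∑ _i : n, (Real.exp 1)⁻¹ :=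
        Finset.sum_le_sum fun i _ => negMulLog_le_inv_exp (h.1.eigenvalues_nonneg i)
  _ = (Fintype.card n : ℝ) * (Real.exp 1)⁻¹ := by
      simp [Finset.sum_const, nsmul_eq_mul, Finset.card_univ]

/-- the standard basis measurement -/
def stdMeas : VNMeas n where
  P j := single j j 1
  herm j := by
    ext a b
    simp [conjTranspose_apply, single, Matrix.of_apply, and_comm, apply_ite]
  idem j := by rw [single_mul_single_same, one_mul]
  rankOne j := by
    simp [Matrix.trace, Matrix.diag, single, Matrix.of_apply]
  orth j k h := by
    show single j j 1 * single k k 1 = 0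
    exact single_mul_single_of_ne (c := (1 : ℂ)) j j k h 1
  sum_eq := by
    ext a b
    simp only [Matrix.sum_apply, single, Matrix.of_apply, Matrix.one_apply, Matrix.of_apply]
    rw [Finset.sum_eq_single a] <;> aesop

instance : Nonempty (VNMeas n) := ⟨stdMeas⟩

lemma isState_conjSum {ι : Type*} [Fintype ι] {ρ : Matrix n n ℂ} (h : IsState ρ)
    (Q : ι → Matrix n n ℂ) (hherm : ∀ j, (Q j).IsHermitian)
    (hsum : ∑ j, Q j * Q j = 1) :
    IsState (∑ j, Q j * ρ * Q j) := by
  constructor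
  · refine Finset.sum_induction _ _ (fun a b ha hb => ha.add hb) PosSemidef.zero
      (fun j _ => ?_)
    have := h.1.mul_mul_conjTranspose_same (Q j)
    rwa [(hherm j).eq] at this
  · rw [Matrix.trace_sum]
    have h2 : ∀ j, (Q j * ρ * Q j).trace = (Q j * Q j * ρ).trace := by
      intro j
      rw [Matrix.trace_mul_cycle]
    simp_rw [h2, ← Matrix.trace_sum, ← Finset.sum_mul, hsum, one_mul, h.2]

lemma kronecker_conjTranspose {m : Type*} [Fintype m] [DecidableEq m]
    (M : Matrix n n ℂ) (N : Matrix m m ℂ) : (M ⊗ₖ N)ᴴ = Mᴴ ⊗ₖ Nᴴ := by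
  ext p q
  simp [conjTranspose_apply, kroneckerMap_apply, star_mul', mul_comm]

lemma kronecker_sum_right {m ι : Type*} [Fintype m] [DecidableEq m] (s : Finset ι)
    (M : Matrix n n ℂ) (f : ι → Matrix m m ℂ) :
    M ⊗ₖ (∑ j ∈ s, f j) = ∑ j ∈ s, M ⊗ₖ f j := by
  ext p q
  simp [kroneckerMap_apply, Matrix.sum_apply, Finset.mul_sum]

end AuxGeneral

section AuxBipartite
set_option linter.unusedSectionVars false
variable {A B : Type*} [Fintype A] [DecidableEq A] [Fintype B] [DecidableEq B]

/-- isometry picking out the `b` slice -/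
def sliceB (b : B) : Matrix A (A × B) ℂ := fun a p => if p = (a, b) then 1 else 0

lemma margFst_eq_conj (ρ : Matrix (A × B) (A × B) ℂ) :
    margFst ρ = ∑ b, (sliceB (A := A) b * ρ : Matrix A (A × B) ℂ) *
      ((sliceB (A := A) b)ᴴ : Matrix (A × B) A ℂ) := by
  ext a a'
  simp only [margFst, Matrix.sum_apply, Matrix.mul_apply, conjTranspose_apply, sliceB]
  refine Finset.sum_congr rfl fun b _ => ?_
  simp [ite_mul, mul_ite, apply_ite star]

lemma trace_margFst (ρ : Matrix (A × B) (A × B) ℂ) : (margFst ρ).trace = ρ.trace := by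
  simp only [Matrix.trace, Matrix.diag, margFst]
  rw [← Finset.sum_product']
  exact Finset.sum_congr rfl fun p _ => rfl

lemma isState_margFst {ρ : Matrix (A × B) (A × B) ℂ} (h : IsState ρ) :
    IsState (margFst ρ) := by
  constructor
  · rw [margFst_eq_conj]
    exact Finset.sum_induction _ _ (fun a b ha hb => ha.add hb) PosSemidef.zero
      (fun b _ => h.1.mul_mul_conjTranspose_same (sliceB b))
  · rw [trace_margFst, h.2]

lemma kronecker_sum_left {ι : Type*} (s : Finset ι)
    (f : ι → Matrix A A ℂ) (N : Matrix B B ℂ) :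
    (∑ j ∈ s, f j) ⊗ₖ N = ∑ j ∈ s, f j ⊗ₖ N := by
  ext p q
  simp [kroneckerMap_apply, Matrix.sum_apply, Finset.sum_mul]

lemma isState_measFst (M : VNMeas A) {ρ : Matrix (A × B) (A × B) ℂ} (h : IsState ρ) :
    IsState (measFst M ρ) := by
  refine isState_conjSum h _ (fun j => ?_) ?_
  · rw [Matrix.IsHermitian, kronecker_conjTranspose, (M.herm j).eq, conjTranspose_one]
  · have : ∀ j, (M.P j ⊗ₖ (1 : Matrix B B ℂ)) * (M.P j ⊗ₖ (1 : Matrix B B ℂ))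
        = M.P j ⊗ₖ (1 : Matrix B B ℂ) := by
      intro j
      rw [← Matrix.mul_kronecker_mul, M.idem j, one_mul]
    simp_rw [this]
    rw [← kronecker_sum_left, M.sum_eq, Matrix.one_kronecker_one]

end AuxBipartite

section AuxTripartite
set_option linter.unusedSectionVars false
variable {A B : Type*} [Fintype A] [DecidableEq A] [Fintype B] [DecidableEq B]
variable {C : Type*} [Fintype C] [DecidableEq C]

/-- isometry picking out the `c` slice of `A × B × C` -/
def sliceC (c : C) : Matrix (A × B) (A × B × C) ℂ := fun x p => if p = (x.1, x.2, c) then 1 else 0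

lemma ptrC3_eq_conj (ρ : Matrix (A × B × C) (A × B × C) ℂ) :
    ptrC3 ρ = ∑ c, (sliceC (A := A) (B := B) c * ρ : Matrix (A × B) (A × B × C) ℂ) *
      ((sliceC (A := A) (B := B) c)ᴴ : Matrix (A × B × C) (A × B) ℂ) := by
  ext x y
  simp only [ptrC3, Matrix.sum_apply, Matrix.mul_apply, conjTranspose_apply, sliceC]
  refine Finset.sum_congr rfl fun c _ => ?_
  simp [ite_mul, mul_ite, apply_ite star]

lemma trace_ptrC3 (ρ : Matrix (A × B × C) (A × B × C) ℂ) : (ptrC3 ρ).trace = ρ.trace := by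
  simp only [Matrix.trace, Matrix.diag, ptrC3, Fintype.sum_prod_type]

lemma isState_ptrC3 {ρ : Matrix (A × B × C) (A × B × C) ℂ} (h : IsState ρ) :
    IsState (ptrC3 ρ) := by
  constructor
  · rw [ptrC3_eq_conj]
    exact Finset.sum_induction _ _ (fun a b ha hb => ha.add hb) PosSemidef.zero
      (fun c _ => h.1.mul_mul_conjTranspose_same (sliceC c))
  · rw [trace_ptrC3, h.2]

lemma ptrBC3_eq_margFst_ptrC3 (ρ : Matrix (A × B × C) (A × B × C) ℂ) :
    ptrBC3 ρ = margFst (ptrC3 ρ) := by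
  ext a a'
  simp only [ptrBC3, margFst, ptrC3]
  rw [Fintype.sum_prod_type (f := fun z : B × C => ρ (a, z) (a', z))]

lemma liftAB_mul (M N : Matrix (A × B) (A × B) ℂ) :
    (liftAB (M * N) : Matrix (A × B × C) (A × B × C) ℂ) = liftAB M * liftAB N := by
  ext p q
  simp only [liftAB, Matrix.mul_apply, Fintype.sum_prod_type]
  simp [mul_ite, ite_mul, mul_zero, zero_mul, Finset.mul_sum, Finset.sum_mul, mul_assoc]

lemma liftAB_one : (liftAB (1 : Matrix (A × B) (A × B) ℂ) : Matrix (A × B × C) _ ℂ) = 1 := by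
  ext p q
  simp only [liftAB, Matrix.one_apply]
  rcases p with ⟨p1, p2, p3⟩; rcases q with ⟨q1, q2, q3⟩
  simp [Prod.ext_iff, ite_and]
  split <;> split <;> simp_all

lemma liftAB_conjTranspose (M : Matrix (A × B) (A × B) ℂ) :
    (liftAB M : Matrix (A × B × C) _ ℂ)ᴴ = liftAB Mᴴ := by
  ext p q
  simp only [liftAB, conjTranspose_apply]
  simp [apply_ite star, eq_comm]

lemma liftAB_sum {ι : Type*} (s : Finset ι) (f : ι → Matrix (A × B) (A × B) ℂ) :
    (liftAB (∑ j ∈ s, f j) : Matrix (A × B × C) _ ℂ) = ∑ j ∈ s, liftAB (f j) := by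
  ext p q
  simp [liftAB, Matrix.sum_apply, Finset.sum_mul]

lemma kron3_eq_liftAB (M : Matrix A A ℂ) (N : Matrix B B ℂ) :
    kron3 M N (1 : Matrix C C ℂ) = liftAB (M ⊗ₖ N) := by
  ext p q
  simp [kron3, liftAB, kroneckerMap_apply, Matrix.one_apply]

lemma sliceC_liftAB (c : C) (X : Matrix (A × B) (A × B) ℂ) :
    (sliceC c : Matrix (A × B) (A × B × C) ℂ) * (liftAB X : Matrix (A × B × C) (A × B × C) ℂ) =
      X * (sliceC c : Matrix (A × B) (A × B × C) ℂ) := by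
  ext x q
  rcases q with ⟨q1, q2, q3⟩
  simp only [Matrix.mul_apply, sliceC, liftAB, Fintype.sum_prod_type]
  simp only [ite_mul, mul_ite, one_mul, mul_one, zero_mul, mul_zero, Prod.mk.injEq,
    ite_and, Finset.sum_ite_eq, Finset.sum_ite_eq', Finset.mem_univ, if_true,
    Finset.sum_ite_irrel, Finset.sum_const_zero]

lemma liftAB_mul_conjT_slice (c : C) (Y : Matrix (A × B) (A × B) ℂ) :
    (liftAB Y : Matrix (A × B × C) _ ℂ) * (sliceC (A := A) (B := B) c)ᴴ =
      (sliceC (A := A) (B := B) c)ᴴ * Y := by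
  have h := congrArg conjTranspose (sliceC_liftAB (A := A) (B := B) c Yᴴ)
  simp only [conjTranspose_mul, liftAB_conjTranspose, conjTranspose_conjTranspose] at h
  exact h

lemma ptrC3_conj (X Y : Matrix (A × B) (A × B) ℂ) (ρ : Matrix (A × B × C) (A × B × C) ℂ) :
    ptrC3 (liftAB X * ρ * liftAB Y) = X * ptrC3 ρ * Y := by
  rw [ptrC3_eq_conj, ptrC3_eq_conj, Finset.mul_sum, Finset.sum_mul]
  refine Finset.sum_congr rfl fun c _ => ?_
  have e1 := sliceC_liftAB (A := A) (B := B) c X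
  have e2 := liftAB_mul_conjT_slice (A := A) (B := B) c Y
  rw [Matrix.mul_assoc (liftAB X) ρ (liftAB Y),
    ← Matrix.mul_assoc (sliceC c) (liftAB X) (ρ * liftAB Y), e1,
    Matrix.mul_assoc (X * sliceC c) (ρ * liftAB Y) ((sliceC c)ᴴ),
    Matrix.mul_assoc ρ (liftAB Y) ((sliceC c)ᴴ), e2]
  simp only [Matrix.mul_assoc]

lemma ptrC3_sum {ι : Type*} (s : Finset ι) (f : ι → Matrix (A × B × C) (A × B × C) ℂ) :
    ptrC3 (∑ j ∈ s, f j) = ∑ j ∈ s, ptrC3 (f j) := by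
  ext x y
  simp only [ptrC3, Matrix.sum_apply]
  rw [Finset.sum_comm]

/-- the product measurement on `A × B` induced by a sequential measurement -/
def prodMeas (m : SeqMeas3 A B) : VNMeas (A × B) where
  P jk := m.fst.P jk.1 ⊗ₖ (m.snd jk.1).P jk.2
  herm jk := by
    show _ = _
    rw [kronecker_conjTranspose, (m.fst.herm jk.1).eq, ((m.snd jk.1).herm jk.2).eq]
  idem jk := by
    show _ = _
    rw [← Matrix.mul_kronecker_mul, m.fst.idem, (m.snd jk.1).idem]
  rankOne jk := by
    show Matrix.trace _ = 1
    rw [Matrix.trace_kronecker, m.fst.rankOne, (m.snd jk.1).rankOne, one_mul]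
  orth jk j'k' h := by
    show (m.fst.P jk.1 ⊗ₖ (m.snd jk.1).P jk.2) * (m.fst.P j'k'.1 ⊗ₖ (m.snd j'k'.1).P j'k'.2) = 0
    rw [← Matrix.mul_kronecker_mul]
    rcases eq_or_ne jk.1 j'k'.1 with h1 | h1
    · have h2 : jk.2 ≠ j'k'.2 := by
        intro h2; exact h (Prod.ext h1 h2)
      rw [← h1, (m.snd jk.1).orth _ _ h2]
      ext p q
      simp [kroneckerMap_apply]
    · rw [m.fst.orth _ _ h1]
      ext p q
      simp [kroneckerMap_apply]
  sum_eq := by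
    rw [Fintype.sum_prod_type]
    have h1 : ∀ j, ∑ k, m.fst.P j ⊗ₖ (m.snd j).P k = m.fst.P j ⊗ₖ (1 : Matrix B B ℂ) := by
      intro j
      rw [← kronecker_sum_right, (m.snd j).sum_eq]
    simp_rw [h1]
    rw [← kronecker_sum_left, m.fst.sum_eq, Matrix.one_kronecker_one]

lemma measAB_prodMeas (m : SeqMeas3 A B) (ρ : Matrix (A × B × C) (A × B × C) ℂ) :
    measAB (prodMeas m) ρ = meas2 m ρ := by
  rw [measAB, meas2, Fintype.sum_prod_type]
  rfl

lemma meas1_eq (m : SeqMeas3 A B) (ρ : Matrix (A × B × C) (A × B × C) ℂ) :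
    meas1 m ρ = ∑ j, liftAB (m.fst.P j ⊗ₖ (1 : Matrix B B ℂ)) * ρ *
      liftAB (m.fst.P j ⊗ₖ (1 : Matrix B B ℂ)) := by
  rw [meas1]
  refine Finset.sum_congr rfl fun j _ => ?_
  rw [kron3_eq_liftAB]

lemma ptrC3_meas1 (m : SeqMeas3 A B) (ρ : Matrix (A × B × C) (A × B × C) ℂ) :
    ptrC3 (meas1 m ρ) = measFst m.fst (ptrC3 ρ) := by
  rw [meas1_eq, ptrC3_sum, measFst]
  exact Finset.sum_congr rfl fun j _ => ptrC3_conj _ _ ρ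

lemma isState_measAB (M : VNMeas (A × B)) {ρ : Matrix (A × B × C) (A × B × C) ℂ}
    (h : IsState ρ) : IsState (measAB M ρ) := by
  refine isState_conjSum h _ (fun j => ?_) ?_
  · rw [Matrix.IsHermitian, liftAB_conjTranspose, (M.herm j).eq]
  · simp_rw [← liftAB_mul, M.idem]
    rw [← liftAB_sum, M.sum_eq, liftAB_one]

end AuxTripartite

/-- `D_{A;B;C}(ρ) ≥ D_{A;B}(ρ^{AB}) + D_{AB;C}(ρ)`. -/
theorem mqd3_ge_discordAB_add_discordABC
    (ρ : Matrix (A × B × C) (A × B × C) ℂ) (hρ : IsState ρ) :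
    mqd3 ρ ≥ discord (ptrC3 ρ) + discordAB_C ρ := by
  have hσ : IsState (ptrC3 ρ) := isState_ptrC3 hρ
  set e := (Real.exp 1)⁻¹ with he
  have hbd1 : BddBelow (Set.range fun M : VNMeas A =>
      ((vnEntropy (measFst M (ptrC3 ρ)) - vnEntropy (margFst (measFst M (ptrC3 ρ)))) -
        (vnEntropy (ptrC3 ρ) - vnEntropy (margFst (ptrC3 ρ))))) := by
    refine ⟨-((Fintype.card A : ℝ) * e + (Fintype.card (A × B) : ℝ) * e), ?_⟩
    rintro x ⟨M, rfl⟩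
    have h1 : IsState (measFst M (ptrC3 ρ)) := isState_measFst M hσ
    have h2 : IsState (margFst (measFst M (ptrC3 ρ))) := isState_margFst h1
    have h4 : IsState (margFst (ptrC3 ρ)) := isState_margFst hσ
    have g1 := vnEntropy_nonneg h1
    have g2 := vnEntropy_le h2
    have g3 := vnEntropy_le hσ
    have g4 := vnEntropy_nonneg h4
    dsimp only
    rw [← he] at g2 g3
    linarith
  have hbd2 : BddBelow (Set.range fun M : VNMeas (A × B) =>
      ((vnEntropy (measAB M ρ) - vnEntropy (ptrC3 (measAB M ρ))) -
        (vnEntropy ρ - vnEntropy (ptrC3 ρ)))) := by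
    refine ⟨-((Fintype.card (A × B) : ℝ) * e + (Fintype.card (A × B × C) : ℝ) * e), ?_⟩
    rintro x ⟨M, rfl⟩
    have h1 : IsState (measAB M ρ) := isState_measAB M hρ
    have h2 : IsState (ptrC3 (measAB M ρ)) := isState_ptrC3 h1
    have g1 := vnEntropy_nonneg h1
    have g2 := vnEntropy_le h2
    have g3 := vnEntropy_le hρ
    have g4 := vnEntropy_nonneg hσ
    dsimp only
    rw [← he] at g2 g3
    linarith
  rw [ge_iff_le, mqd3]
  have hne : Nonempty (SeqMeas3 A B) := ⟨⟨stdMeas, fun _ => stdMeas⟩⟩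
  refine le_ciInf fun m => ?_
  have key : mqd3Val m ρ =
      (((vnEntropy (measFst m.fst (ptrC3 ρ)) - vnEntropy (margFst (measFst m.fst (ptrC3 ρ)))) -
        (vnEntropy (ptrC3 ρ) - vnEntropy (margFst (ptrC3 ρ))))) +
      (((vnEntropy (measAB (prodMeas m) ρ) - vnEntropy (ptrC3 (measAB (prodMeas m) ρ))) -
        (vnEntropy ρ - vnEntropy (ptrC3 ρ)))) := by
    rw [mqd3Val, ptrBC3_eq_margFst_ptrC3, ptrBC3_eq_margFst_ptrC3, ptrC3_meas1,
      measAB_prodMeas]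
    ring
  rw [key]
  exact add_le_add (ciInf_le hbd1 m.fst) (ciInf_le hbd2 (prodMeas m))

end
end

section
/- The global quantum discord of a product state factors out the uncorrelated subsystem: for ρ = ρ^{AB} ⊗ ρ^C, D_{A:B:C}(ρ^{AB} ⊗ ρ^C) = D_{A:B}(ρ^{AB}). -/
open Matrix Kronecker BigOperators
open scoped ComplexOrder

noncomputable section

variable {A B : Type*} [Fintype A] [DecidableEq A] [Fintype B] [DecidableEq B]

variable {C : Type*} [Fintype C] [DecidableEq C]

/-- the reduced state `ρ^B` of a tripartite state -/
noncomputable def margB3 (ρ : Matrix (A × B × C) (A × B × C) ℂ) : Matrix B B ℂ :=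
  fun b b' => ∑ a, ∑ c, ρ (a, b, c) (a, b', c)

/-- the reduced state `ρ^C` of a tripartite state -/
noncomputable def margC3 (ρ : Matrix (A × B × C) (A × B × C) ℂ) : Matrix C C ℂ :=
  fun c c' => ∑ x : A × B, ρ (x.1, x.2, c) (x.1, x.2, c')

/-- fully local von Neumann measurement on a bipartite state -/
noncomputable def measLoc2 (MA : VNMeas A) (MB : VNMeas B)
    (ρ : Matrix (A × B) (A × B) ℂ) : Matrix (A × B) (A × B) ℂ :=
  ∑ j, ∑ k, (MA.P j ⊗ₖ MB.P k) * ρ * (MA.P j ⊗ₖ MB.P k)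

/-- bipartite global quantum discord -/
noncomputable def gqd2 (ρ : Matrix (A × B) (A × B) ℂ) : ℝ :=
  ⨅ m : VNMeas A × VNMeas B, (mutualInfo ρ - mutualInfo (measLoc2 m.1 m.2 ρ))

/-- generalized mutual information of a tripartite state -/
noncomputable def I3 (ρ : Matrix (A × B × C) (A × B × C) ℂ) : ℝ :=
  vnEntropy (ptrBC3 ρ) + vnEntropy (margB3 ρ) + vnEntropy (margC3 ρ) - vnEntropy ρ

/-- fully local von Neumann measurement on a tripartite state -/
noncomputable def measLoc3 (MA : VNMeas A) (MB : VNMeas B) (MC : VNMeas C)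
    (ρ : Matrix (A × B × C) (A × B × C) ℂ) : Matrix (A × B × C) (A × B × C) ℂ :=
  ∑ j, ∑ k, ∑ l, kron3 (MA.P j) (MB.P k) (MC.P l) * ρ * kron3 (MA.P j) (MB.P k) (MC.P l)

/-- tripartite global quantum discord `D_{A:B:C}` -/
noncomputable def gqd3 (ρ : Matrix (A × B × C) (A × B × C) ℂ) : ℝ :=
  ⨅ m : VNMeas A × VNMeas B × VNMeas C,
    (I3 ρ - I3 (measLoc3 m.1 m.2.1 m.2.2 ρ))



/-! ### Auxiliary spectral machinery -/

section SpectralAux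

open Polynomial

variable {n m : Type*} [Fintype n] [DecidableEq n] [Fintype m] [DecidableEq m]

lemma my_charpoly_conj (M U V : Matrix n n ℂ) (hUV : U * V = 1) :
    (U * M * V).charpoly = M.charpoly := by
  have hmap : ∀ P Q : Matrix n n ℂ, (P * Q).map (Polynomial.C : ℂ →+* ℂ[X]) = P.map Polynomial.C * Q.map Polynomial.C :=
    fun P Q => Matrix.map_mul
  have hsc : U.map (Polynomial.C : ℂ →+* ℂ[X]) * Matrix.scalar n (X : ℂ[X]) * V.map Polynomial.C
      = Matrix.scalar n (X : ℂ[X]) := by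
    rw [scalar_apply, ← smul_one_eq_diagonal, Matrix.mul_smul, Matrix.smul_mul, mul_one,
      ← Matrix.map_one (Polynomial.C : ℂ →+* ℂ[X]) (map_zero _) (map_one _), ← hmap, hUV]
  have hcm : charmatrix (U * M * V) = U.map Polynomial.C * charmatrix M * V.map Polynomial.C := by
    unfold charmatrix
    simp only [RingHom.mapMatrix_apply, mul_sub, sub_mul, hmap, hsc]
  have hdet : (U.map (Polynomial.C : ℂ →+* ℂ[X])).det * (V.map C).det = 1 := by
    rw [← det_mul, ← hmap, hUV, Matrix.map_one _ (map_zero _) (map_one _), det_one]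
  rw [Matrix.charpoly, Matrix.charpoly, hcm, det_mul, det_mul,
    mul_comm ((U.map (Polynomial.C : ℂ →+* ℂ[X])).det), mul_assoc, hdet, mul_one]

lemma my_charpoly_diagonal (d : n → ℂ) :
    (Matrix.diagonal d).charpoly = ∏ i, (X - Polynomial.C (d i)) := by
  have h : charmatrix (Matrix.diagonal d) = Matrix.diagonal fun i => X - Polynomial.C (d i) := by
    ext i j
    by_cases h : i = j
    · subst h; simp [charmatrix_apply]
    · rw [charmatrix_apply_ne _ _ _ h, Matrix.diagonal_apply_ne _ h,
        Matrix.diagonal_apply_ne _ h, map_zero, neg_zero]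
  rw [Matrix.charpoly, h, det_diagonal]

lemma my_roots_charpoly_diagonal (d : n → ℂ) :
    (Matrix.diagonal d).charpoly.roots = Finset.univ.val.map d := by
  rw [my_charpoly_diagonal]
  have : ∏ i, (X - Polynomial.C (d i)) = ((Finset.univ.val.map d).map fun a => X - Polynomial.C a).prod := by
    rw [Multiset.map_map]; rfl
  rw [this, roots_multiset_prod_X_sub_C]

lemma my_eig_roots {M : Matrix n n ℂ} (hM : M.IsHermitian) :
    M.charpoly.roots = (Finset.univ.val.map hM.eigenvalues).map (fun r : ℝ => (r : ℂ)) := by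
  have hU : (hM.eigenvectorUnitary : Matrix n n ℂ) * star (hM.eigenvectorUnitary : Matrix n n ℂ)
      = 1 := (Matrix.mem_unitaryGroup_iff).mp hM.eigenvectorUnitary.2
  conv_lhs => rw [hM.spectral_theorem]; simp only [Unitary.conjStarAlgAut_apply, Unitary.coe_star]
  rw [my_charpoly_conj _ _ _ hU, my_roots_charpoly_diagonal, Multiset.map_map]
  rfl

lemma my_sum_f_eig {M : Matrix n n ℂ} (hM : M.IsHermitian) (f : ℝ → ℝ) :
    ∑ i, f (hM.eigenvalues i)
      = ((Finset.univ.val.map hM.eigenvalues).map f).sum := by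
  rw [Multiset.map_map, Finset.sum]
  rfl

lemma my_vnEntropy_eq {M : Matrix n n ℂ} (hM : M.IsHermitian) :
    vnEntropy M = ((Finset.univ.val.map hM.eigenvalues).map Real.negMulLog).sum := by
  rw [vnEntropy, dif_pos hM, my_sum_f_eig hM]

lemma my_eigms_eq {M : Matrix n n ℂ} {N : Matrix m m ℂ}
    (hM : M.IsHermitian) (hN : N.IsHermitian) (h : M.charpoly.roots = N.charpoly.roots) :
    Finset.univ.val.map hM.eigenvalues = Finset.univ.val.map hN.eigenvalues := by
  apply Multiset.map_injective (f := fun r : ℝ => (r : ℂ)) Complex.ofReal_injective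
  rw [← my_eig_roots hM, ← my_eig_roots hN, h]

lemma my_vnEntropy_congr {M : Matrix n n ℂ} {N : Matrix m m ℂ}
    (hM : M.IsHermitian) (hN : N.IsHermitian) (h : M.charpoly.roots = N.charpoly.roots) :
    vnEntropy M = vnEntropy N := by
  rw [my_vnEntropy_eq hM, my_vnEntropy_eq hN, my_eigms_eq hM hN h]

lemma my_sum_eig_eq_one {M : Matrix n n ℂ} (hM : M.IsHermitian) (h1 : M.trace = 1) :
    ∑ i, hM.eigenvalues i = 1 := by
  have ht : M.trace = ∑ i, (hM.eigenvalues i : ℂ) := by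
    conv_lhs => rw [hM.spectral_theorem]; simp only [Unitary.conjStarAlgAut_apply, Unitary.coe_star]
    rw [Matrix.trace_mul_cycle,
      (Matrix.mem_unitaryGroup_iff').mp hM.eigenvectorUnitary.2, one_mul, Matrix.trace_diagonal]
    rfl
  have h2 : ((∑ i, hM.eigenvalues i : ℝ) : ℂ) = 1 := by push_cast [← ht]; exact h1
  exact_mod_cast h2

lemma my_kron_isHermitian {M : Matrix n n ℂ} {N : Matrix m m ℂ}
    (hM : M.IsHermitian) (hN : N.IsHermitian) :
    (M ⊗ₖ N).IsHermitian := by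
  ext p q
  have e1 : star (M q.1 p.1) = M p.1 q.1 := by
    conv_rhs => rw [← hM.eq]
    rw [Matrix.conjTranspose_apply]
  have e2 : star (N q.2 p.2) = N p.2 q.2 := by
    conv_rhs => rw [← hN.eq]
    rw [Matrix.conjTranspose_apply]
  simp only [Matrix.conjTranspose_apply, Matrix.kroneckerMap_apply, star_mul', e1, e2]
  try ring

lemma my_vnEntropy_kron {M : Matrix n n ℂ} {N : Matrix m m ℂ}
    (hM : M.IsHermitian) (hN : N.IsHermitian) (hM1 : M.trace = 1) (hN1 : N.trace = 1) :
    vnEntropy (M ⊗ₖ N) = vnEntropy M + vnEntropy N := by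
  have hK : (M ⊗ₖ N).IsHermitian := my_kron_isHermitian hM hN
  set a := hM.eigenvalues
  set b := hN.eigenvalues
  -- the Kronecker product is conjugate to the Kronecker of the diagonalizations
  have hkey : (M ⊗ₖ N).charpoly.roots
      = Finset.univ.val.map (fun p : n × m => ((a p.1 * b p.2 : ℝ) : ℂ)) := by
    have hU : (hM.eigenvectorUnitary : Matrix n n ℂ)
        * star (hM.eigenvectorUnitary : Matrix n n ℂ) = 1 :=
      (Matrix.mem_unitaryGroup_iff).mp hM.eigenvectorUnitary.2
    have hV : (hN.eigenvectorUnitary : Matrix m m ℂ)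
        * star (hN.eigenvectorUnitary : Matrix m m ℂ) = 1 :=
      (Matrix.mem_unitaryGroup_iff).mp hN.eigenvectorUnitary.2
    have hMN : M ⊗ₖ N
        = ((hM.eigenvectorUnitary : Matrix n n ℂ) ⊗ₖ (hN.eigenvectorUnitary : Matrix m m ℂ))
          * (Matrix.diagonal (RCLike.ofReal ∘ a) ⊗ₖ Matrix.diagonal (RCLike.ofReal ∘ b))
          * ((star (hM.eigenvectorUnitary : Matrix n n ℂ))
              ⊗ₖ (star (hN.eigenvectorUnitary : Matrix m m ℂ))) := by
      rw [← Matrix.mul_kronecker_mul, ← Matrix.mul_kronecker_mul]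
      conv_lhs => rw [hM.spectral_theorem, hN.spectral_theorem]; simp only [Unitary.conjStarAlgAut_apply, Unitary.coe_star]
    have hUV : ((hM.eigenvectorUnitary : Matrix n n ℂ) ⊗ₖ (hN.eigenvectorUnitary : Matrix m m ℂ))
        * ((star (hM.eigenvectorUnitary : Matrix n n ℂ))
            ⊗ₖ (star (hN.eigenvectorUnitary : Matrix m m ℂ))) = 1 := by
      rw [← Matrix.mul_kronecker_mul, hU, hV, Matrix.one_kronecker_one]
    rw [hMN, my_charpoly_conj _ _ _ hUV, Matrix.diagonal_kronecker_diagonal,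
      my_roots_charpoly_diagonal]
    congr 1
    funext p
    simp [Complex.ofReal_mul]
  have heig : Finset.univ.val.map hK.eigenvalues
      = Finset.univ.val.map (fun p : n × m => a p.1 * b p.2) := by
    apply Multiset.map_injective (f := fun r : ℝ => (r : ℂ)) Complex.ofReal_injective
    rw [← my_eig_roots hK, hkey, Multiset.map_map]
    rfl
  have hsum : vnEntropy (M ⊗ₖ N) = ∑ p : n × m, Real.negMulLog (a p.1 * b p.2) := by
    rw [my_vnEntropy_eq hK, heig, Multiset.map_map, Finset.sum]
    rfl
  have ha1 : ∑ i, a i = 1 := my_sum_eig_eq_one hM hM1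
  have hb1 : ∑ j, b j = 1 := my_sum_eig_eq_one hN hN1
  rw [hsum, Fintype.sum_prod_type]
  simp only [Real.negMulLog_mul]
  rw [vnEntropy, dif_pos hM, vnEntropy, dif_pos hN]
  simp only [Finset.sum_add_distrib, ← Finset.sum_mul, ← Finset.mul_sum, ha1, hb1,
    one_mul, mul_one]
  rfl

end SpectralAux

/-! ### the standard-basis von Neumann measurement -/

noncomputable def stdVN (n : Type*) [Fintype n] [DecidableEq n] : VNMeas n where
  P j := Matrix.single j j 1
  herm j := by
    ext a b
    simp only [Matrix.conjTranspose_apply, Matrix.single, Matrix.of_apply]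
    rw [apply_ite star, star_one, star_zero]
    congr 1
    exact propext and_comm
  idem j := by rw [Matrix.single_mul_single_same, mul_one]
  rankOne j := by
    simp [Matrix.trace, Matrix.diag, Matrix.single]
  orth j k h := by
    exact Matrix.single_mul_single_of_ne (c := (1:ℂ)) j j k h 1
  sum_eq := by
    ext a b
    by_cases h : a = b
    · subst h
      simp [Matrix.sum_apply, Matrix.single, Matrix.one_apply]
    · simp only [Matrix.sum_apply, Matrix.single, Matrix.of_apply, Matrix.one_apply, h,
        if_false]
      refine Finset.sum_eq_zero fun j _ => ?_
      rw [if_neg]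
      rintro ⟨rfl, rfl⟩
      exact h rfl

instance (n : Type*) [Fintype n] [DecidableEq n] : Nonempty (VNMeas n) := ⟨stdVN n⟩

section MainAux

variable {A B : Type*} [Fintype A] [DecidableEq A] [Fintype B] [DecidableEq B]
variable {C : Type*} [Fintype C] [DecidableEq C]

/-- the measured state on a single party -/
noncomputable def measC {n : Type*} [Fintype n] [DecidableEq n] (M : VNMeas n)
    (ρ : Matrix n n ℂ) : Matrix n n ℂ :=
  ∑ l, M.P l * ρ * M.P l

lemma kron_sum_right {ι : Type*} (s : Finset ι) (M : Matrix A A ℂ) (f : ι → Matrix B B ℂ) :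
    (M ⊗ₖ ∑ l ∈ s, f l) = ∑ l ∈ s, M ⊗ₖ f l := by
  ext p q
  simp [Matrix.sum_apply, Finset.mul_sum]

lemma sum_kron_left {ι : Type*} (s : Finset ι) (f : ι → Matrix A A ℂ) (M : Matrix B B ℂ) :
    ((∑ l ∈ s, f l) ⊗ₖ M) = ∑ l ∈ s, f l ⊗ₖ M := by
  ext p q
  simp [Matrix.sum_apply, Finset.sum_mul]

lemma measC_trace {n : Type*} [Fintype n] [DecidableEq n] (M : VNMeas n)
    (ρ : Matrix n n ℂ) : (measC M ρ).trace = ρ.trace := by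
  rw [measC, Matrix.trace_sum]
  have : ∀ l, (M.P l * ρ * M.P l).trace = (M.P l * ρ).trace := by
    intro l
    rw [Matrix.trace_mul_cycle, M.idem l]
  simp_rw [this, ← Matrix.trace_sum, ← Finset.sum_mul, M.sum_eq, one_mul]

lemma measC_herm {n : Type*} [Fintype n] [DecidableEq n] (M : VNMeas n)
    {ρ : Matrix n n ℂ} (hρ : ρ.IsHermitian) : (measC M ρ).IsHermitian := by
  show (∑ l, M.P l * ρ * M.P l)ᴴ = ∑ l, M.P l * ρ * M.P l
  rw [Matrix.conjTranspose_sum]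
  refine Finset.sum_congr rfl fun l _ => ?_
  rw [Matrix.conjTranspose_mul, Matrix.conjTranspose_mul, (M.herm l).eq, hρ.eq, mul_assoc]


/-- the product of two von Neumann measurements -/
noncomputable def prodVN (MA : VNMeas A) (MB : VNMeas B) : VNMeas (A × B) where
  P jk := MA.P jk.1 ⊗ₖ MB.P jk.2
  herm jk := my_kron_isHermitian (MA.herm jk.1) (MB.herm jk.2)
  idem jk := by rw [← Matrix.mul_kronecker_mul, MA.idem, MB.idem]
  rankOne jk := by rw [Matrix.trace_kronecker, MA.rankOne, MB.rankOne, mul_one]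
  orth jk jk' h := by
    rw [← Matrix.mul_kronecker_mul]
    by_cases h1 : jk.1 = jk'.1
    · have h2 : jk.2 ≠ jk'.2 := fun h2 => h (Prod.ext h1 h2)
      rw [MB.orth _ _ h2, Matrix.kronecker_zero]
    · rw [MA.orth _ _ h1, Matrix.zero_kronecker]
  sum_eq := by
    show ∑ jk : A × B, (MA.P jk.1 ⊗ₖ MB.P jk.2) = 1
    rw [Fintype.sum_prod_type]
    have h1 : ∀ j, ∑ k, (MA.P j ⊗ₖ MB.P k) = MA.P j ⊗ₖ (1 : Matrix B B ℂ) := by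
      intro j; rw [← kron_sum_right, MB.sum_eq]
    simp_rw [h1]
    rw [← sum_kron_left, MA.sum_eq, Matrix.one_kronecker_one]

lemma measLoc2_eq_measC (MA : VNMeas A) (MB : VNMeas B) (ρ : Matrix (A × B) (A × B) ℂ) :
    measLoc2 MA MB ρ = measC (prodVN MA MB) ρ := by
  rw [measLoc2, measC, Fintype.sum_prod_type]
  rfl

lemma measLoc2_trace (MA : VNMeas A) (MB : VNMeas B) (ρ : Matrix (A × B) (A × B) ℂ) :
    (measLoc2 MA MB ρ).trace = ρ.trace := by
  rw [measLoc2_eq_measC, measC_trace]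

lemma measLoc2_herm (MA : VNMeas A) (MB : VNMeas B) {ρ : Matrix (A × B) (A × B) ℂ}
    (hρ : ρ.IsHermitian) : (measLoc2 MA MB ρ).IsHermitian := by
  rw [measLoc2_eq_measC]; exact measC_herm _ hρ


end MainAux

/-- the product state `ρ^{AB} ⊗ ρ^C` as a matrix on `A × B × C` -/
noncomputable def prodState3 (ρAB : Matrix (A × B) (A × B) ℂ) (ρC : Matrix C C ℂ) :
    Matrix (A × B × C) (A × B × C) ℂ :=
  fun p q => ρAB (p.1, p.2.1) (q.1, q.2.1) * ρC p.2.2 q.2.2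


section MainAux2
variable {A B : Type*} [Fintype A] [DecidableEq A] [Fintype B] [DecidableEq B]
variable {C : Type*} [Fintype C] [DecidableEq C]

lemma reindex_sum {ι n m : Type*} [Fintype n] [DecidableEq n] [Fintype m] [DecidableEq m]
    (e : n ≃ m) (s : Finset ι) (f : ι → Matrix n n ℂ) :
    Matrix.reindex e e (∑ i ∈ s, f i) = ∑ i ∈ s, Matrix.reindex e e (f i) := by
  ext p q
  simp [Matrix.sum_apply]

lemma reindex_mul {n m : Type*} [Fintype n] [DecidableEq n] [Fintype m] [DecidableEq m]
    (e : n ≃ m) (X Y : Matrix n n ℂ) :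
    Matrix.reindex e e X * Matrix.reindex e e Y = Matrix.reindex e e (X * Y) := by
  have := (Matrix.reindexAlgEquiv ℂ ℂ e).map_mul X Y
  simpa [Matrix.reindexAlgEquiv_apply] using this.symm

lemma prodState3_eq (σ : Matrix (A × B) (A × B) ℂ) (τ : Matrix C C ℂ) :
    prodState3 σ τ
      = Matrix.reindex (Equiv.prodAssoc A B C) (Equiv.prodAssoc A B C) (σ ⊗ₖ τ) := rfl

lemma kron3_eq (M : Matrix A A ℂ) (N : Matrix B B ℂ) (K : Matrix C C ℂ) :
    kron3 M N K
      = Matrix.reindex (Equiv.prodAssoc A B C) (Equiv.prodAssoc A B C) ((M ⊗ₖ N) ⊗ₖ K) := rfl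

lemma measLoc3_prod (MA : VNMeas A) (MB : VNMeas B) (MC : VNMeas C)
    (σ : Matrix (A × B) (A × B) ℂ) (τ : Matrix C C ℂ) :
    measLoc3 MA MB MC (prodState3 σ τ) = prodState3 (measLoc2 MA MB σ) (measC MC τ) := by
  rw [measLoc3, prodState3_eq, prodState3_eq]
  simp_rw [kron3_eq, reindex_mul, ← reindex_sum]
  congr 1
  simp_rw [← Matrix.mul_kronecker_mul]
  rw [measLoc2, measC]
  have h1 : ∀ j k, ∑ l, ((MA.P j ⊗ₖ MB.P k) * σ * (MA.P j ⊗ₖ MB.P k)) ⊗ₖ (MC.P l * τ * MC.P l)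
      = ((MA.P j ⊗ₖ MB.P k) * σ * (MA.P j ⊗ₖ MB.P k)) ⊗ₖ (∑ l, MC.P l * τ * MC.P l) := by
    intro j k
    rw [kron_sum_right]
  simp_rw [h1]
  have h2 : ∀ j, ∑ k, ((MA.P j ⊗ₖ MB.P k) * σ * (MA.P j ⊗ₖ MB.P k))
        ⊗ₖ (∑ l, MC.P l * τ * MC.P l)
      = (∑ k, (MA.P j ⊗ₖ MB.P k) * σ * (MA.P j ⊗ₖ MB.P k))
        ⊗ₖ (∑ l, MC.P l * τ * MC.P l) := by
    intro j
    rw [sum_kron_left]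
  simp_rw [h2]
  rw [sum_kron_left]

lemma trace_eq_sum_diag {n : Type*} [Fintype n] (M : Matrix n n ℂ) :
    ∑ i, M i i = M.trace := rfl

lemma ptrBC3_prod (σ : Matrix (A × B) (A × B) ℂ) (τ : Matrix C C ℂ) (hτ : τ.trace = 1) :
    ptrBC3 (prodState3 σ τ) = margFst σ := by
  ext a a'
  show ∑ z : B × C, σ (a, z.1) (a', z.1) * τ z.2 z.2 = ∑ b, σ (a, b) (a', b)
  rw [Fintype.sum_prod_type]
  simp_rw [← Finset.mul_sum, trace_eq_sum_diag, hτ, mul_one]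

lemma margB3_prod (σ : Matrix (A × B) (A × B) ℂ) (τ : Matrix C C ℂ) (hτ : τ.trace = 1) :
    margB3 (prodState3 σ τ) = margSnd σ := by
  ext b b'
  show ∑ a, ∑ c, σ (a, b) (a, b') * τ c c = ∑ a, σ (a, b) (a, b')
  simp_rw [← Finset.mul_sum, trace_eq_sum_diag, hτ, mul_one]

lemma margC3_prod (σ : Matrix (A × B) (A × B) ℂ) (τ : Matrix C C ℂ) (hσ : σ.trace = 1) :
    margC3 (prodState3 σ τ) = τ := by
  ext c c'
  show ∑ x : A × B, σ x x * τ c c' = τ c c'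
  rw [← Finset.sum_mul, trace_eq_sum_diag, hσ, one_mul]

lemma vnEntropy_reindex {n m : Type*} [Fintype n] [DecidableEq n] [Fintype m] [DecidableEq m]
    (e : n ≃ m) {K : Matrix n n ℂ} (hK : K.IsHermitian) :
    vnEntropy (Matrix.reindex e e K) = vnEntropy K := by
  have hK' : (Matrix.reindex e e K).IsHermitian := by
    rw [Matrix.IsHermitian, Matrix.conjTranspose_reindex, hK.eq]
  exact my_vnEntropy_congr hK' hK (by rw [Matrix.charpoly_reindex])

lemma vnEntropy_prodState3 (σ : Matrix (A × B) (A × B) ℂ) (τ : Matrix C C ℂ)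
    (hσ : σ.IsHermitian) (hτ : τ.IsHermitian) (hσ1 : σ.trace = 1) (hτ1 : τ.trace = 1) :
    vnEntropy (prodState3 σ τ) = vnEntropy σ + vnEntropy τ := by
  rw [prodState3_eq, vnEntropy_reindex _ (my_kron_isHermitian hσ hτ),
    my_vnEntropy_kron hσ hτ hσ1 hτ1]

lemma I3_prod (σ : Matrix (A × B) (A × B) ℂ) (τ : Matrix C C ℂ)
    (hσ : σ.IsHermitian) (hτ : τ.IsHermitian) (hσ1 : σ.trace = 1) (hτ1 : τ.trace = 1) :
    I3 (prodState3 σ τ) = mutualInfo σ := by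
  rw [I3, mutualInfo, ptrBC3_prod _ _ hτ1, margB3_prod _ _ hτ1, margC3_prod _ _ hσ1,
    vnEntropy_prodState3 _ _ hσ hτ hσ1 hτ1]
  ring


end MainAux2

/-- `D_{A:B:C}(ρ^{AB} ⊗ ρ^C) = D_{A:B}(ρ^{AB})`. -/
theorem gqd3_prod_eq_gqd2
    (ρAB : Matrix (A × B) (A × B) ℂ) (ρC : Matrix C C ℂ)
    (hAB : IsState ρAB) (hC : IsState ρC) :
    gqd3 (prodState3 ρAB ρC) = gqd2 ρAB := by
  have key : ∀ (MA : VNMeas A) (MB : VNMeas B) (MC : VNMeas C),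
      I3 (prodState3 ρAB ρC) - I3 (measLoc3 MA MB MC (prodState3 ρAB ρC))
        = mutualInfo ρAB - mutualInfo (measLoc2 MA MB ρAB) := by
    intro MA MB MC
    rw [I3_prod ρAB ρC hAB.1.1 hC.1.1 hAB.2 hC.2, measLoc3_prod,
      I3_prod _ _ (measLoc2_herm MA MB hAB.1.1) (measC_herm MC hC.1.1)
        (by rw [measLoc2_trace, hAB.2]) (by rw [measC_trace, hC.2])]
  rw [gqd3, gqd2, iInf, iInf]
  congr 1
  apply Set.ext
  intro x
  simp only [Set.mem_range]
  constructor
  · rintro ⟨m, rfl⟩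
    exact ⟨(m.1, m.2.1), (key m.1 m.2.1 m.2.2).symm⟩
  · rintro ⟨p, rfl⟩
    exact ⟨(p.1, p.2, stdVN C), key p.1 p.2 (stdVN C)⟩

end
end
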